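/- arXiv:1107.1112 — 6 statements merged into one kernel-verified Lean document; each statement's English description precedes it below -/
import Mathlib

section
/- Suppose β₁ = −1 + k₁α₁ and β₂ = ε + k₂α₂ for some ε ∈ {1,−1} and some integers k₁, k₂. Then for every integer b, the identity w(−1, b, 0, −b − k₁ − k₂) = η₂^{ε} holds in G. -/
/- The group `G = ⟨c₁, c₂, h ∣ [c₁,h], [c₂,h], c₁^{α₁}h^{β₁}, c₂^{α₂}h^{β₂}⟩`,
the fundamental group of the Seifert fibered space `D(β₁/α₁, β₂/α₂)`. -/
def seifertRels (α₁ α₂ β₁ β₂ : ℤ) : Set (FreeGroup (Fin 3)) :=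
  {FreeGroup.of 0 * FreeGroup.of 2 * (FreeGroup.of 0)⁻¹ * (FreeGroup.of 2)⁻¹,
   FreeGroup.of 1 * FreeGroup.of 2 * (FreeGroup.of 1)⁻¹ * (FreeGroup.of 2)⁻¹,
   FreeGroup.of 0 ^ α₁ * FreeGroup.of 2 ^ β₁,
   FreeGroup.of 1 ^ α₂ * FreeGroup.of 2 ^ β₂}

abbrev SeifertGroup (α₁ α₂ β₁ β₂ : ℤ) := PresentedGroup (seifertRels α₁ α₂ β₁ β₂)

variable (α₁ α₂ β₁ β₂ : ℤ)

/-- The generator `c₁`. -/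
def c₁ : SeifertGroup α₁ α₂ β₁ β₂ := PresentedGroup.of 0

/-- The generator `c₂`. -/
def c₂ : SeifertGroup α₁ α₂ β₁ β₂ := PresentedGroup.of 1

/-- The generator `h` (a regular fiber). -/
def hGen : SeifertGroup α₁ α₂ β₁ β₂ := PresentedGroup.of 2

/-- The class `η₁ = c₁^{γ₁} h^{δ₁}` of the first exceptional fiber. -/
def η₁ (γ₁ δ₁ : ℤ) : SeifertGroup α₁ α₂ β₁ β₂ :=
  c₁ α₁ α₂ β₁ β₂ ^ γ₁ * hGen α₁ α₂ β₁ β₂ ^ δ₁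

/-- The class `η₂ = c₂^{γ₂} h^{δ₂}` of the second exceptional fiber. -/
def η₂ (γ₂ δ₂ : ℤ) : SeifertGroup α₁ α₂ β₁ β₂ :=
  c₂ α₁ α₂ β₁ β₂ ^ γ₂ * hGen α₁ α₂ β₁ β₂ ^ δ₂

/-- The word `w(a,b,c,d) = (c₁c₂)^a h^b · η₁ · (c₁c₂)^c h^d`. -/
def w (γ₁ δ₁ a b c d : ℤ) : SeifertGroup α₁ α₂ β₁ β₂ :=
  (c₁ α₁ α₂ β₁ β₂ * c₂ α₁ α₂ β₁ β₂) ^ a * hGen α₁ α₂ β₁ β₂ ^ b *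
    η₁ α₁ α₂ β₁ β₂ γ₁ δ₁ *
    (c₁ α₁ α₂ β₁ β₂ * c₂ α₁ α₂ β₁ β₂) ^ c * hGen α₁ α₂ β₁ β₂ ^ d

lemma relOne {r : FreeGroup (Fin 3)} (hr : r ∈ seifertRels α₁ α₂ β₁ β₂) :
    PresentedGroup.mk (seifertRels α₁ α₂ β₁ β₂) r = 1 :=
  (QuotientGroup.eq_one_iff r).mpr (Subgroup.subset_normalClosure hr)

lemma comm1 : hGen α₁ α₂ β₁ β₂ * c₁ α₁ α₂ β₁ β₂ = c₁ α₁ α₂ β₁ β₂ * hGen α₁ α₂ β₁ β₂ := by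
  have h := relOne α₁ α₂ β₁ β₂ (show _ ∈ seifertRels α₁ α₂ β₁ β₂ from Set.mem_insert _ _)
  simp only [map_mul, map_inv] at h
  rw [mul_inv_eq_one, mul_inv_eq_iff_eq_mul] at h
  exact h.symm

lemma comm2 : hGen α₁ α₂ β₁ β₂ * c₂ α₁ α₂ β₁ β₂ = c₂ α₁ α₂ β₁ β₂ * hGen α₁ α₂ β₁ β₂ := by
  have h := relOne α₁ α₂ β₁ β₂ (show _ ∈ seifertRels α₁ α₂ β₁ β₂ from
    Set.mem_insert_iff.mpr (Or.inr (Set.mem_insert _ _)))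
  simp only [map_mul, map_inv] at h
  rw [mul_inv_eq_one, mul_inv_eq_iff_eq_mul] at h
  exact h.symm

lemma rel1 : c₁ α₁ α₂ β₁ β₂ ^ α₁ = hGen α₁ α₂ β₁ β₂ ^ (-β₁) := by
  have h := relOne α₁ α₂ β₁ β₂ (show _ ∈ seifertRels α₁ α₂ β₁ β₂ from
    Set.mem_insert_iff.mpr (Or.inr (Set.mem_insert_iff.mpr (Or.inr (Set.mem_insert _ _)))))
  simp only [map_mul, map_zpow] at h
  rw [mul_eq_one_iff_eq_inv, ← zpow_neg] at h
  exact h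

lemma rel2 : c₂ α₁ α₂ β₁ β₂ ^ α₂ = hGen α₁ α₂ β₁ β₂ ^ (-β₂) := by
  have h := relOne α₁ α₂ β₁ β₂ (show _ ∈ seifertRels α₁ α₂ β₁ β₂ from
    Set.mem_insert_iff.mpr (Or.inr (Set.mem_insert_iff.mpr (Or.inr
      (Set.mem_insert_iff.mpr (Or.inr (Set.mem_singleton _)))))))
  simp only [map_mul, map_zpow] at h
  rw [mul_eq_one_iff_eq_inv, ← zpow_neg] at h
  exact h

/-- If `β₁ = −1 + k₁α₁` and `β₂ = ε + k₂α₂` with `ε ∈ {1,−1}`, then for every integer `b`,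
`w(−1, b, 0, −b − k₁ − k₂) = η₂^ε` in `G`. -/
theorem statement2 (γ₁ δ₁ γ₂ δ₂ ε k₁ k₂ : ℤ)
    (hα₁ : 1 < α₁) (hα₂ : 1 < α₂)
    (hcop₁ : Int.gcd α₁ β₁ = 1) (hcop₂ : Int.gcd α₂ β₂ = 1)
    (hγδ₁ : α₁ * δ₁ - β₁ * γ₁ = 1) (hγδ₂ : α₂ * δ₂ - β₂ * γ₂ = 1)
    (hε : ε = 1 ∨ ε = -1) (hβ₁ : β₁ = -1 + k₁ * α₁) (hβ₂ : β₂ = ε + k₂ * α₂) :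
    ∀ b : ℤ, w α₁ α₂ β₁ β₂ γ₁ δ₁ (-1) b 0 (-b - k₁ - k₂) =
      η₂ α₁ α₂ β₁ β₂ γ₂ δ₂ ^ ε := by
  intro b
  set C1 := c₁ α₁ α₂ β₁ β₂ with hC1
  set C2 := c₂ α₁ α₂ β₁ β₂ with hC2
  set H := hGen α₁ α₂ β₁ β₂ with hH
  have hc1 : Commute H C1 := comm1 α₁ α₂ β₁ β₂
  have hc2 : Commute H C2 := comm2 α₁ α₂ β₁ β₂
  -- swap lemmas
  have s1 : ∀ n : ℤ, H ^ n * C1 = C1 * H ^ n := fun n => (hc1.zpow_left n).eq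
  have s2 : ∀ n : ℤ, H ^ n * C2 = C2 * H ^ n := fun n => (hc2.zpow_left n).eq
  have s1i : ∀ n : ℤ, H ^ n * C1⁻¹ = C1⁻¹ * H ^ n := fun n => ((hc1.zpow_left n).inv_right.eq)
  have s2i : ∀ n : ℤ, H ^ n * C2⁻¹ = C2⁻¹ * H ^ n := fun n => ((hc2.zpow_left n).inv_right.eq)
  -- exponent rewrites
  have e1 : C1 ^ γ₁ = C1 * H ^ (-β₁ * (k₁ * γ₁ - δ₁)) := by
    have hg : γ₁ = 1 + α₁ * (k₁ * γ₁ - δ₁) := by linear_combination hγδ₁ + γ₁ * hβ₁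
    conv_lhs => rw [hg]
    rw [zpow_add, zpow_one, zpow_mul, rel1, ← zpow_mul]
  have e2 : C2 ^ (γ₂ * ε) = C2⁻¹ * H ^ (-β₂ * (δ₂ - k₂ * γ₂)) := by
    have hg : γ₂ * ε = -1 + α₂ * (δ₂ - k₂ * γ₂) := by
      rcases hε with h | h <;> subst h <;> linear_combination -hγδ₂ - γ₂ * hβ₂
    conv_lhs => rw [hg]
    rw [zpow_add, zpow_neg_one, zpow_mul, rel2, ← zpow_mul]
  have eη : η₂ α₁ α₂ β₁ β₂ γ₂ δ₂ ^ ε = C2 ^ (γ₂ * ε) * H ^ (δ₂ * ε) := by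
    rw [η₂, (hc2.symm.zpow_zpow γ₂ δ₂).mul_zpow, ← zpow_mul, ← zpow_mul]
  rw [w, η₁, eη, e1, e2]
  rw [zpow_zero, mul_one, zpow_neg_one, mul_inv_rev]
  simp only [← hC1, ← hC2, ← hH]
  have t1 : ∀ (n : ℤ) (x : SeifertGroup α₁ α₂ β₁ β₂),
      H ^ n * (C1 * x) = C1 * (H ^ n * x) := fun n x => by rw [← mul_assoc, s1 n, mul_assoc]
  have t2 : ∀ (n : ℤ) (x : SeifertGroup α₁ α₂ β₁ β₂),
      H ^ n * (C2 * x) = C2 * (H ^ n * x) := fun n x => by rw [← mul_assoc, s2 n, mul_assoc]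
  have t1i : ∀ (n : ℤ) (x : SeifertGroup α₁ α₂ β₁ β₂),
      H ^ n * (C1⁻¹ * x) = C1⁻¹ * (H ^ n * x) := fun n x => by rw [← mul_assoc, s1i n, mul_assoc]
  have t2i : ∀ (n : ℤ) (x : SeifertGroup α₁ α₂ β₁ β₂),
      H ^ n * (C2⁻¹ * x) = C2⁻¹ * (H ^ n * x) := fun n x => by rw [← mul_assoc, s2i n, mul_assoc]
  simp only [mul_assoc, s1, s2, s1i, s2i, t1, t2, t1i, t2i, inv_mul_cancel_left, ← zpow_add]
  have key : b + (-β₁ * (k₁ * γ₁ - δ₁) + δ₁ + (-b - k₁ - k₂)) =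
      -β₂ * (δ₂ - k₂ * γ₂) + δ₂ * ε := by
    linear_combination k₁ * hγδ₁ + δ₁ * hβ₁ + k₂ * hγδ₂ + δ₂ * hβ₂
  congr 2
  linear_combination k₁ * hγδ₁ + δ₁ * hβ₁ + k₂ * hγδ₂ + δ₂ * hβ₂
end

section
/- The equation w(a,b,c,d) = 1 has no solutions: for all integers a, b, c, d, the element w(a,b,c,d) is a nontrivial element of G. Equivalently (since h is central in G), η₁ is not equal to (c₁c₂)^m h^n for any integers m, n; i.e., an exceptional fiber of the Seifert fibered space D(β₁/α₁, β₂/α₂) is not homotopic to a loop on its boundary. -/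
variable (α₁ α₂ β₁ β₂ : ℤ)

namespace SeifertAux

open Monoid Monoid.CoprodI

variable {M : Fin 2 → Type*} [∀ i, Group (M i)] [∀ i, DecidableEq (M i)]

lemma word_prod_injective :
    Function.Injective (Word.prod : Word M → CoprodI M) :=
  (Word.equiv (M := M)).symm.injective

lemma neword_prod_ne_one {i j : Fin 2} (w : NeWord M i j) : w.prod ≠ 1 := by
  intro h
  have h2 : w.toWord = Word.empty := word_prod_injective (by
    rw [Word.prod_empty]; exact h)
  exact w.toList_ne_nil (congrArg Word.toList h2)

/-- The alternating reduced word `v (u v)^n`. -/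
def altA (u : M 0) (v : M 1) (hu : u ≠ 1) (hv : v ≠ 1) : ℕ → NeWord M 1 1
  | 0 => .singleton v hv
  | n+1 => .append (.append (altA u v hu hv n) (by decide) (.singleton u hu)) (by decide)
      (.singleton v hv)

lemma altA_prod (u : M 0) (v : M 1) (hu : u ≠ 1) (hv : v ≠ 1) (n : ℕ) :
    (altA u v hu hv n).prod = CoprodI.of v * (CoprodI.of u * CoprodI.of v) ^ n := by
  induction n with
  | zero => simp [altA]
  | succ n ih =>
      rw [altA, NeWord.append_prod, NeWord.append_prod, ih, NeWord.prod_singleton,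
        NeWord.prod_singleton, pow_succ, mul_assoc, mul_assoc]

lemma keyNat (u : M 0) (v : M 1) (hu : u ≠ 1) (hv : v ≠ 1) (t : M 0) (ht : t ≠ 1) (k : ℕ) :
    CoprodI.of t ≠ (CoprodI.of u * CoprodI.of v) ^ k := by
  intro h
  cases k with
  | zero =>
      rw [pow_zero] at h
      exact ht (CoprodI.of_injective 0 (h.trans (map_one _).symm))
  | succ n =>
      have hA : CoprodI.of (u⁻¹ * t) = (altA u v hu hv n).prod := by
        rw [altA_prod, map_mul, map_inv, h, pow_succ', mul_assoc, inv_mul_cancel_left]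
      by_cases hs : u⁻¹ * t = 1
      · rw [hs] at hA
        exact neword_prod_ne_one _ (by rw [← hA, map_one])
      · refine neword_prod_ne_one
          (NeWord.append (altA u v hu hv n) (by decide)
            (NeWord.singleton (u⁻¹ * t)⁻¹ (inv_ne_one.2 hs))) ?_
        rw [NeWord.append_prod, NeWord.prod_singleton, ← hA, map_inv, mul_inv_cancel]

lemma keyInt (u : M 0) (v : M 1) (hu : u ≠ 1) (hv : v ≠ 1) (t : M 0) (ht : t ≠ 1) (m : ℤ) :
    CoprodI.of t ≠ (CoprodI.of u * CoprodI.of v) ^ m := by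
  intro h
  obtain ⟨k, rfl | rfl⟩ := Int.eq_nat_or_neg m
  · rw [zpow_natCast] at h
    exact keyNat u v hu hv t ht k h
  · refine keyNat u v hu hv t⁻¹ (inv_ne_one.2 ht) k ?_
    rw [map_inv, h, ← zpow_natCast, ← zpow_neg, neg_neg]

abbrev MM (n₁ n₂ : ℕ) : Fin 2 → Type := fun i => Multiplicative (ZMod (![n₁, n₂] i))

theorem statement4' (γ₁ δ₁ : ℤ)
    (hα₁ : 1 < α₁) (hα₂ : 1 < α₂)
    (hγδ₁ : α₁ * δ₁ - β₁ * γ₁ = 1) :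
    (∀ a b c d : ℤ, w α₁ α₂ β₁ β₂ γ₁ δ₁ a b c d ≠ 1) ∧
    (∀ m n : ℤ, η₁ α₁ α₂ β₁ β₂ γ₁ δ₁ ≠
      (c₁ α₁ α₂ β₁ β₂ * c₂ α₁ α₂ β₁ β₂) ^ m * hGen α₁ α₂ β₁ β₂ ^ n) := by
  set n₁ := α₁.toNat with hn₁def
  set n₂ := α₂.toNat with hn₂def
  have hn₁ : (n₁ : ℤ) = α₁ := Int.toNat_of_nonneg (by omega)
  have hn₂ : (n₂ : ℤ) = α₂ := Int.toNat_of_nonneg (by omega)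
  let u₀ : MM n₁ n₂ 0 := Multiplicative.ofAdd (1 : ZMod n₁)
  let v₀ : MM n₁ n₂ 1 := Multiplicative.ofAdd (1 : ZMod n₂)
  haveI : Fact (1 < n₁) := ⟨by omega⟩
  haveI : Fact (1 < n₂) := ⟨by omega⟩
  have hu₀ : u₀ ≠ 1 := by
    intro h; exact (one_ne_zero : (1 : ZMod n₁) ≠ 0) (ofAdd_eq_one.mp h)
  have hv₀ : v₀ ≠ 1 := by
    intro h; exact (one_ne_zero : (1 : ZMod n₂) ≠ 0) (ofAdd_eq_one.mp h)
  -- the map to the free product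
  let f : Fin 3 → CoprodI (MM n₁ n₂) := ![CoprodI.of u₀, CoprodI.of v₀, 1]
  have hf : ∀ r ∈ seifertRels α₁ α₂ β₁ β₂, FreeGroup.lift f r = 1 := by
    intro r hr
    have h0 : FreeGroup.lift f (FreeGroup.of (0 : Fin 3)) = CoprodI.of u₀ := by simp [f]
    have h1 : FreeGroup.lift f (FreeGroup.of (1 : Fin 3)) = CoprodI.of v₀ := by simp [f]
    have h2 : FreeGroup.lift f (FreeGroup.of (2 : Fin 3)) = 1 := by simp [f]
    have hu : CoprodI.of u₀ ^ α₁ = 1 := by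
      have : u₀ ^ α₁ = 1 := by
        show Multiplicative.ofAdd (1 : ZMod n₁) ^ α₁ = 1
        rw [← ofAdd_zsmul]
        have : (α₁ : ℤ) • (1 : ZMod n₁) = 0 := by
          rw [zsmul_eq_mul, mul_one, ← hn₁]
          exact_mod_cast ZMod.natCast_self n₁
        rw [this]; rfl
      rw [← map_zpow, this, map_one]
    have hv : CoprodI.of v₀ ^ α₂ = 1 := by
      have : v₀ ^ α₂ = 1 := by
        show Multiplicative.ofAdd (1 : ZMod n₂) ^ α₂ = 1
        rw [← ofAdd_zsmul]
        have : (α₂ : ℤ) • (1 : ZMod n₂) = 0 := by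
          rw [zsmul_eq_mul, mul_one, ← hn₂]
          exact_mod_cast ZMod.natCast_self n₂
        rw [this]; rfl
      rw [← map_zpow, this, map_one]
    rcases hr with rfl | rfl | rfl | rfl
    · simp [h0, h2]
    · simp [h1, h2]
    · rw [map_mul, map_zpow, map_zpow, h0, h2, hu, one_zpow, mul_one]
    · rw [map_mul, map_zpow, map_zpow, h1, h2, hv, one_zpow, mul_one]
  let φ : SeifertGroup α₁ α₂ β₁ β₂ →* CoprodI (MM n₁ n₂) := PresentedGroup.toGroup hf
  have hφ0 : φ (c₁ α₁ α₂ β₁ β₂) = CoprodI.of u₀ := PresentedGroup.toGroup.of hf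
  have hφ1 : φ (c₂ α₁ α₂ β₁ β₂) = CoprodI.of v₀ := PresentedGroup.toGroup.of hf
  have hφ2 : φ (hGen α₁ α₂ β₁ β₂) = 1 := PresentedGroup.toGroup.of hf
  -- the image of η₁
  have hγ : (γ₁ : ZMod n₁) ≠ 0 := by
    intro h
    rw [ZMod.intCast_zmod_eq_zero_iff_dvd, hn₁] at h
    rcases h with ⟨e, he⟩
    have : α₁ ∣ 1 := ⟨δ₁ - β₁ * e, by rw [← hγδ₁, he]; ring⟩
    have := Int.le_of_dvd one_pos this
    omega
  set t : MM n₁ n₂ 0 := Multiplicative.ofAdd ((γ₁ : ZMod n₁)) with htdef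
  have ht : t ≠ 1 := by intro h; exact hγ (ofAdd_eq_one.mp h)
  have hφη : φ (η₁ α₁ α₂ β₁ β₂ γ₁ δ₁) = CoprodI.of t := by
    rw [η₁, map_mul, map_zpow, map_zpow, hφ0, hφ2, one_zpow, mul_one, ← map_zpow]
    congr 1
    show Multiplicative.ofAdd (1 : ZMod n₁) ^ γ₁ = _
    rw [← ofAdd_zsmul, zsmul_eq_mul, mul_one]
    exact htdef.symm
  have key := keyInt u₀ v₀ hu₀ hv₀ t ht
  constructor
  · intro a b c d heq
    apply key (-a + -c)
    have := congrArg φ heq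
    rw [w, map_mul, map_mul, map_mul, map_mul, map_zpow, map_zpow, map_zpow, map_zpow,
      map_mul, hφ0, hφ1, hφ2, hφη, one_zpow, one_zpow, mul_one, mul_one, map_one] at this
    rw [zpow_add]
    set X := CoprodI.of u₀ * CoprodI.of v₀
    calc CoprodI.of t = X ^ (-a) * (X ^ a * CoprodI.of t * X ^ c) * X ^ (-c) := by
          group
      _ = X ^ (-a) * X ^ (-c) := by rw [this]; group
  · intro m n heq
    apply key m
    have := congrArg φ heq
    rw [hφη, map_mul, map_zpow, map_zpow, map_mul, hφ0, hφ1, hφ2, one_zpow, mul_one] at this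
    exact this

end SeifertAux

/-- The equation `w(a,b,c,d) = 1` has no solutions; equivalently, `η₁` is not of the
form `(c₁c₂)^m h^n` for any integers `m, n` (an exceptional fiber of
`D(β₁/α₁, β₂/α₂)` is not homotopic to a loop on the boundary). -/
theorem statement4 (γ₁ δ₁ : ℤ)
    (hα₁ : 1 < α₁) (hα₂ : 1 < α₂)
    (hcop₁ : Int.gcd α₁ β₁ = 1) (hcop₂ : Int.gcd α₂ β₂ = 1)
    (hγδ₁ : α₁ * δ₁ - β₁ * γ₁ = 1) :
    (∀ a b c d : ℤ, w α₁ α₂ β₁ β₂ γ₁ δ₁ a b c d ≠ 1) ∧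
    (∀ m n : ℤ, η₁ α₁ α₂ β₁ β₂ γ₁ δ₁ ≠
      (c₁ α₁ α₂ β₁ β₂ * c₂ α₁ α₂ β₁ β₂) ^ m * hGen α₁ α₂ β₁ β₂ ^ n) := by
  exact SeifertAux.statement4' α₁ α₂ β₁ β₂ γ₁ δ₁ hα₁ hα₂ hγδ₁
end

section
/- Let a ≤ −1 and c ≥ 1 be integers, and let γ be an integer with γ ≢ 0 (mod α₁). Then the element (xy)^a x^γ (xy)^c of Γ is neither a power of x nor a power of y. -/
/-- The free product `Γ = C_{α₁} ∗ C_{α₂}` of cyclic groups of orders `α₁` and `α₂`. -/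
abbrev FPCyclic (α₁ α₂ : ℕ) :=
  Monoid.Coprod (Multiplicative (ZMod α₁)) (Multiplicative (ZMod α₂))

variable (α₁ α₂ : ℕ)

/-- The fixed generator `x` of the first factor `C_{α₁}`. -/
def xGen : FPCyclic α₁ α₂ := Monoid.Coprod.inl (Multiplicative.ofAdd (1 : ZMod α₁))

/-- The fixed generator `y` of the second factor `C_{α₂}`. -/
def yGen : FPCyclic α₁ α₂ := Monoid.Coprod.inr (Multiplicative.ofAdd (1 : ZMod α₂))

namespace FP6Aux
open Monoid Monoid.CoprodI

/-- The binary free product realized as an indexed free product over `Bool`. -/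
abbrev Fm (b : Bool) : Type := cond b (Multiplicative (ZMod α₁)) (Multiplicative (ZMod α₂))

instance (b : Bool) : CommGroup (Fm α₁ α₂ b) := by
  cases b
  · exact inferInstanceAs (CommGroup (Multiplicative (ZMod α₂)))
  · exact inferInstanceAs (CommGroup (Multiplicative (ZMod α₁)))

instance (b : Bool) : DecidableEq (Fm α₁ α₂ b) := by
  cases b
  · exact inferInstanceAs (DecidableEq (Multiplicative (ZMod α₂)))
  · exact inferInstanceAs (DecidableEq (Multiplicative (ZMod α₁)))

abbrev G := CoprodI (Fm α₁ α₂)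

def e₁ : Fm α₁ α₂ true := Multiplicative.ofAdd (1 : ZMod α₁)
def e₂ : Fm α₁ α₂ false := Multiplicative.ofAdd (1 : ZMod α₂)

noncomputable def φ : FPCyclic α₁ α₂ →* G α₁ α₂ :=
  Coprod.lift
    ((CoprodI.of (i := true) : Fm α₁ α₂ true →* G α₁ α₂) : Multiplicative (ZMod α₁) →* G α₁ α₂)
    ((CoprodI.of (i := false) : Fm α₁ α₂ false →* G α₁ α₂) : Multiplicative (ZMod α₂) →* G α₁ α₂)

def X : G α₁ α₂ := CoprodI.of (e₁ α₁ α₂)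
def Y : G α₁ α₂ := CoprodI.of (e₂ α₁ α₂)

variable {α₁ α₂}

lemma prod_inj : Function.Injective (Word.prod : Word (Fm α₁ α₂) → G α₁ α₂) := by
  intro w1 w2 h
  have h1 := Word.equiv.right_inv w1
  have h2 := Word.equiv.right_inv w2
  rw [← h1, ← h2]
  exact congrArg Word.equiv h

lemma one_ne (hα₁ : 2 ≤ α₁) : e₁ α₁ α₂ ≠ 1 := by
  haveI : Fact (1 < α₁) := ⟨by omega⟩
  intro h
  exact one_ne_zero (Multiplicative.ofAdd.injective (h.trans rfl) : (1 : ZMod α₁) = 0)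

lemma one_ne' (hα₂ : 2 ≤ α₂) : e₂ α₁ α₂ ≠ 1 := by
  haveI : Fact (1 < α₂) := ⟨by omega⟩
  intro h
  exact one_ne_zero (Multiplicative.ofAdd.injective (h.trans rfl) : (1 : ZMod α₂) = 0)

lemma neg_one_ne (hα₁ : 2 ≤ α₁) : (e₁ α₁ α₂)⁻¹ ≠ 1 :=
  inv_ne_one.2 (one_ne hα₁)

lemma neg_one_ne' (hα₂ : 2 ≤ α₂) : (e₂ α₁ α₂)⁻¹ ≠ 1 :=
  inv_ne_one.2 (one_ne' hα₂)

lemma xgamma_ne {γ : ℤ} (hγ : (γ : ZMod α₁) ≠ 0) : (e₁ α₁ α₂) ^ γ ≠ 1 := by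
  intro h
  apply hγ
  have h2 : (Multiplicative.ofAdd (1 : ZMod α₁) : Multiplicative (ZMod α₁)) ^ γ = 1 := h
  rw [← ofAdd_zsmul] at h2
  have h3 : γ • (1 : ZMod α₁) = 0 := Multiplicative.ofAdd.injective (h2.trans rfl)
  rwa [zsmul_eq_mul, mul_one] at h3

lemma key {H : Type*} [Group H] (g : H) (k : ℤ) : g ^ (-(k + 1)) = g⁻¹ * g ^ (-k) := by
  rw [show (-(k+1)) = -1 + -k by ring, zpow_add, zpow_neg_one]

lemma conj_pow {H : Type*} [Group H] (g t : H) (γ : ℤ) :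
    g⁻¹ * (g ^ γ * (g * t)) = g ^ γ * t := by
  group

lemma X_def : X α₁ α₂ = CoprodI.of (e₁ α₁ α₂) := rfl
lemma Y_def : Y α₁ α₂ = CoprodI.of (e₂ α₁ α₂) := rfl

lemma X_zpow (γ : ℤ) : (X α₁ α₂) ^ γ = CoprodI.of ((e₁ α₁ α₂) ^ γ) := by
  rw [X, ← map_zpow]

lemma Y_zpow (γ : ℤ) : (Y α₁ α₂) ^ γ = CoprodI.of ((e₂ α₁ α₂) ^ γ) := by
  rw [Y, ← map_zpow]

lemma Y_inv : (Y α₁ α₂)⁻¹ = CoprodI.of ((e₂ α₁ α₂)⁻¹) := by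
  rw [Y, map_inv]

lemma X_inv : (X α₁ α₂)⁻¹ = CoprodI.of ((e₁ α₁ α₂)⁻¹) := by
  rw [X, map_inv]

/-- `(Y⁻¹ X^γ Y) · (XY)^c` as a reduced word. -/
lemma exists_word_right (hα₁ : 2 ≤ α₁) (hα₂ : 2 ≤ α₂) {γ : ℤ} (hγ : (γ : ZMod α₁) ≠ 0) (c : ℕ) :
    ∃ w : NeWord (Fm α₁ α₂) false false,
      w.prod = (Y α₁ α₂)⁻¹ * (X α₁ α₂) ^ γ * (Y α₁ α₂) * (X α₁ α₂ * Y α₁ α₂) ^ (c : ℤ) ∧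
        2 ≤ w.toList.length := by
  induction c with
  | zero =>
    refine ⟨.append (.append (.singleton _ (neg_one_ne' hα₂)) (by decide)
        (.singleton _ (xgamma_ne hγ))) (by decide) (.singleton _ (one_ne' hα₂)), ?_, by simp⟩
    simp only [NeWord.append_prod, NeWord.prod_singleton]
    simp only [Nat.cast_zero, zpow_zero, mul_one, ← X_zpow, ← Y_inv, ← Y_def]
  | succ c ih =>
    obtain ⟨w, hw, hl⟩ := ih
    refine ⟨.append w (by decide) (.append (.singleton _ (one_ne hα₁)) (by decide)
        (.singleton _ (one_ne' hα₂))), ?_, ?_⟩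
    · simp only [NeWord.append_prod, NeWord.prod_singleton, hw, ← X_def, ← Y_def]
      push_cast
      rw [zpow_add_one]
      simp only [mul_assoc]
    · simp only [NeWord.toList, List.length_append]
      omega

/-- `(XY)^{-(n+1)} X^γ (XY)^{c+1}` as a reduced word. -/
lemma exists_word (hα₁ : 2 ≤ α₁) (hα₂ : 2 ≤ α₂) {γ : ℤ} (hγ : (γ : ZMod α₁) ≠ 0) (n c : ℕ) :
    ∃ w : NeWord (Fm α₁ α₂) false false,
      w.prod = (X α₁ α₂ * Y α₁ α₂) ^ (-((n : ℤ) + 1)) * (X α₁ α₂) ^ γ *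
          (X α₁ α₂ * Y α₁ α₂) ^ ((c : ℤ) + 1) ∧ 2 ≤ w.toList.length := by
  induction n with
  | zero =>
    obtain ⟨w, hw, hl⟩ := exists_word_right hα₁ hα₂ hγ c
    refine ⟨w, ?_, hl⟩
    rw [hw, show ((c : ℤ) + 1) = 1 + (c : ℤ) by ring, zpow_one_add,
      show (-(((0:ℕ) : ℤ) + 1)) = (-1 : ℤ) by norm_num, zpow_neg_one, mul_inv_rev]
    simp only [mul_assoc]
    rw [conj_pow]
  | succ n ih =>
    obtain ⟨w, hw, hl⟩ := ih
    refine ⟨.append (.append (.singleton _ (neg_one_ne' hα₂)) (by decide)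
        (.singleton _ (neg_one_ne hα₁))) (by decide) w, ?_, ?_⟩
    · simp only [NeWord.append_prod, NeWord.prod_singleton, hw, ← Y_inv, ← X_inv]
      push_cast
      rw [key (X α₁ α₂ * Y α₁ α₂) ((n : ℤ) + 1), mul_inv_rev]
      simp only [mul_assoc]
    · simp only [NeWord.toList, List.length_append]
      omega

/-- A word of length at least 2 cannot equal an element of a single factor. -/
lemma not_small {i : Bool} (w : NeWord (Fm α₁ α₂) false false) (hl : 2 ≤ w.toList.length)
    (x : Fm α₁ α₂ i) : w.prod ≠ CoprodI.of x := by
  intro h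
  by_cases hx : x = 1
  · subst hx
    rw [map_one] at h
    have h1 : Word.prod w.toWord = Word.prod (Word.empty : Word (Fm α₁ α₂)) := by
      rw [Word.prod_empty]; exact h
    have h2 := congrArg Word.toList (prod_inj h1)
    simp only [Word.empty] at h2
    rw [show w.toWord.toList = w.toList from rfl] at h2
    rw [h2] at hl
    simp at hl
  · have h1 : Word.prod w.toWord = Word.prod (NeWord.singleton x hx).toWord := by
      rw [show Word.prod (NeWord.singleton x hx).toWord = (NeWord.singleton x hx).prod from rfl,
        NeWord.prod_singleton]
      exact h
    have h2 := congrArg Word.toList (prod_inj h1)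
    rw [show w.toWord.toList = w.toList from rfl,
      show (NeWord.singleton x hx).toWord.toList = [⟨i, x⟩] from rfl] at h2
    rw [h2] at hl
    simp at hl

end FP6Aux

/-- For integers `a ≤ −1`, `c ≥ 1` and `γ ≢ 0 (mod α₁)`, the element
`(xy)^a x^γ (xy)^c` of `Γ` is neither a power of `x` nor a power of `y`. -/
theorem statement6 (hα₁ : 2 ≤ α₁) (hα₂ : 2 ≤ α₂) (a c γ : ℤ)
    (ha : a ≤ -1) (hc : 1 ≤ c) (hγ : ¬ ((α₁ : ℤ) ∣ γ)) :
    ¬ ∃ m : ℤ,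
      (xGen α₁ α₂ * yGen α₁ α₂) ^ a * xGen α₁ α₂ ^ γ * (xGen α₁ α₂ * yGen α₁ α₂) ^ c =
          xGen α₁ α₂ ^ m ∨
      (xGen α₁ α₂ * yGen α₁ α₂) ^ a * xGen α₁ α₂ ^ γ * (xGen α₁ α₂ * yGen α₁ α₂) ^ c =
          yGen α₁ α₂ ^ m := by
  open FP6Aux in
  rintro ⟨m, h | h⟩ <;>
  · have hγ' : (γ : ZMod α₁) ≠ 0 := fun h0 =>
      hγ ((ZMod.intCast_zmod_eq_zero_iff_dvd γ α₁).mp h0)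
    obtain ⟨n, hn⟩ : ∃ n : ℕ, a = -((n : ℤ) + 1) := ⟨(-a - 1).toNat, by omega⟩
    obtain ⟨k, hk⟩ : ∃ k : ℕ, c = (k : ℤ) + 1 := ⟨(c - 1).toNat, by omega⟩
    obtain ⟨w, hw, hl⟩ := exists_word hα₁ hα₂ hγ' n k
    have hX : φ α₁ α₂ (xGen α₁ α₂) = X α₁ α₂ := Monoid.Coprod.lift_apply_inl _ _ _
    have hY : φ α₁ α₂ (yGen α₁ α₂) = Y α₁ α₂ := Monoid.Coprod.lift_apply_inr _ _ _
    have himg := congrArg (φ α₁ α₂) h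
    simp only [map_mul, map_zpow, hX, hY] at himg
    rw [hn, hk, ← hw] at himg
    first
    | exact not_small w hl _ (himg.trans (X_zpow m))
    | exact not_small w hl _ (himg.trans (Y_zpow m))
end

section
/- Let a ≤ −1 and γ be integers such that (xy)^a x^γ is a power of x or a power of y in Γ. Then a = −1 and γ ≡ 1 (mod α₁); moreover, in that case (xy)^{−1} x^{γ} = y^{−1} in Γ. -/
variable (α₁ α₂ : ℕ)

section FPAuxSection

open Monoid Monoid.CoprodI

namespace FPAux

variable (α₁ α₂ : ℕ)

def Gfam : Bool → Type := fun b => cond b (Multiplicative (ZMod α₁)) (Multiplicative (ZMod α₂))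

instance (b : Bool) : Group (Gfam α₁ α₂ b) := by
  cases b
  · exact inferInstanceAs (Group (Multiplicative (ZMod α₂)))
  · exact inferInstanceAs (Group (Multiplicative (ZMod α₁)))

instance (b : Bool) : DecidableEq (Gfam α₁ α₂ b) := by
  cases b
  · exact inferInstanceAs (DecidableEq (Multiplicative (ZMod α₂)))
  · exact inferInstanceAs (DecidableEq (Multiplicative (ZMod α₁)))

/-- The generator of the first factor, as an element of the family. -/
def xg : Gfam α₁ α₂ true := Multiplicative.ofAdd (1 : ZMod α₁)

/-- The generator of the second factor, as an element of the family. -/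
def yg : Gfam α₁ α₂ false := Multiplicative.ofAdd (1 : ZMod α₂)

/-- The image of the generator of the first factor. -/
def X : CoprodI (Gfam α₁ α₂) := CoprodI.of (xg α₁ α₂)

/-- The image of the generator of the second factor. -/
def Y : CoprodI (Gfam α₁ α₂) := CoprodI.of (yg α₁ α₂)

/-- The comparison homomorphism from the binary coproduct to the indexed coproduct. -/
def φ : FPCyclic α₁ α₂ →* CoprodI (Gfam α₁ α₂) :=
  Monoid.Coprod.lift
    (show Multiplicative (ZMod α₁) →* _ from CoprodI.of (M := Gfam α₁ α₂) (i := true))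
    (show Multiplicative (ZMod α₂) →* _ from CoprodI.of (M := Gfam α₁ α₂) (i := false))

variable {α₁ α₂}

lemma φ_x : φ α₁ α₂ (xGen α₁ α₂) = X α₁ α₂ := by
  rw [xGen, φ, Monoid.Coprod.lift_apply_inl]; rfl

lemma φ_y : φ α₁ α₂ (yGen α₁ α₂) = Y α₁ α₂ := by
  rw [yGen, φ, Monoid.Coprod.lift_apply_inr]; rfl

lemma word_eq_empty {w : Word (Gfam α₁ α₂)} (h : w.prod = 1) : w = Word.empty :=
  (Word.equiv (M := Gfam α₁ α₂)).symm.injective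
    (h.trans (Word.prod_empty (M := Gfam α₁ α₂)).symm)

lemma neword_prod_ne_one {i j : Bool} (w : NeWord (Gfam α₁ α₂) i j) : w.prod ≠ 1 := by
  intro h
  have := word_eq_empty (w := w.toWord) h
  have h2 : w.toWord.toList = [] := by rw [this]; rfl
  exact w.toList_ne_nil h2

lemma X_zpow (c : ℤ) : X α₁ α₂ ^ c = CoprodI.of (xg α₁ α₂ ^ c) := by
  rw [X, ← map_zpow]

lemma Y_zpow (c : ℤ) : Y α₁ α₂ ^ c = CoprodI.of (yg α₁ α₂ ^ c) := by
  rw [Y, ← map_zpow]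

lemma hX (hα₁ : 2 ≤ α₁) : xg α₁ α₂ ≠ 1 := by
  haveI : Fact (1 < α₁) := ⟨hα₁⟩
  intro h
  have h' : Multiplicative.ofAdd (1 : ZMod α₁) = 1 := h
  exact one_ne_zero (Multiplicative.ofAdd.injective h')

lemma hY (hα₂ : 2 ≤ α₂) : yg α₁ α₂ ≠ 1 := by
  haveI : Fact (1 < α₂) := ⟨hα₂⟩
  intro h
  have h' : Multiplicative.ofAdd (1 : ZMod α₂) = 1 := h
  exact one_ne_zero (Multiplicative.ofAdd.injective h')

/-- For `k ≥ 0`, `(YX)^(k+1)` is the product of a reduced nonempty word. -/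
lemma exists_V (hα₁ : 2 ≤ α₁) (hα₂ : 2 ≤ α₂) (k : ℕ) :
    ∃ w : NeWord (Gfam α₁ α₂) false true, w.prod = (Y α₁ α₂ * X α₁ α₂) ^ (k + 1) := by
  induction k with
  | zero =>
      refine ⟨NeWord.append (NeWord.singleton _ (hY hα₂)) (by simp)
        (NeWord.singleton _ (hX hα₁)), ?_⟩
      simp [X, Y]
  | succ k ih =>
      obtain ⟨w, hw⟩ := ih
      refine ⟨NeWord.append w (by simp)
        (NeWord.append (NeWord.singleton _ (hY hα₂)) (by simp)
          (NeWord.singleton _ (hX hα₁))), ?_⟩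
      simp only [NeWord.append_prod, NeWord.prod_singleton, hw]
      rw [X, Y, ← pow_succ]

/-- Elements of the two factors that are equal must be trivial. -/
lemma of_eq_of {u : Gfam α₁ α₂ true} {v : Gfam α₁ α₂ false}
    (h : CoprodI.of u = CoprodI.of v) : u = 1 ∧ v = 1 := by
  by_cases hu : u = 1
  · subst hu
    refine ⟨rfl, ?_⟩
    by_contra hv
    have : (NeWord.singleton v hv).prod = 1 := by
      simp [NeWord.prod_singleton, ← h, map_one]
    exact neword_prod_ne_one _ this
  · by_cases hv : v = 1
    · subst hv
      have : (NeWord.singleton u hu).prod = 1 := by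
        simp [NeWord.prod_singleton, h, map_one]
      exact absurd this (neword_prod_ne_one _)
    · have : (NeWord.append (NeWord.singleton u hu) (by simp)
          (NeWord.singleton v⁻¹ (inv_ne_one.2 hv))).prod = 1 := by
        simp only [NeWord.append_prod, NeWord.prod_singleton, map_inv]
        rw [h, mul_inv_cancel]
      exact absurd this (neword_prod_ne_one _)

/-- Key lemma: if `(XY)^n = X^s Y^t` with `n ≥ 1`, then `n = 1` and the powers are forced. -/
lemma key (hα₁ : 2 ≤ α₁) (hα₂ : 2 ≤ α₂) (n : ℕ) (hn : 1 ≤ n) (s t : ℤ)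
    (h : (X α₁ α₂ * Y α₁ α₂) ^ n = X α₁ α₂ ^ s * Y α₁ α₂ ^ t) :
    n = 1 ∧ X α₁ α₂ ^ (s - 1) = 1 ∧ Y α₁ α₂ ^ (t - 1) = 1 := by
  have h1gen : ∀ k : ℕ, (X α₁ α₂ * Y α₁ α₂) ^ (k + 1)
      = X α₁ α₂ * (Y α₁ α₂ * X α₁ α₂) ^ k * Y α₁ α₂ := by
    intro k
    induction k with
    | zero => simp
    | succ k ih => rw [pow_succ, ih, pow_succ]; group
  have hmain : CoprodI.of (xg α₁ α₂ ^ (1 - s)) * (Y α₁ α₂ * X α₁ α₂) ^ (n - 1) *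
      CoprodI.of (yg α₁ α₂ ^ (1 - t)) = 1 := by
    rw [← X_zpow, ← Y_zpow]
    have h1 : (X α₁ α₂ * Y α₁ α₂) ^ n
        = X α₁ α₂ * (Y α₁ α₂ * X α₁ α₂) ^ (n - 1) * Y α₁ α₂ := by
      obtain ⟨k, rfl⟩ := Nat.exists_eq_add_of_le hn
      have hk : 1 + k - 1 = k := by omega
      rw [hk, add_comm]
      exact h1gen k
    have e1 : X α₁ α₂ ^ (1 - s) = X α₁ α₂ ^ (-s) * X α₁ α₂ := by group
    have e2 : Y α₁ α₂ ^ (1 - t) = Y α₁ α₂ * Y α₁ α₂ ^ (-t) := by group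
    rw [e1, e2]
    calc X α₁ α₂ ^ (-s) * X α₁ α₂ * (Y α₁ α₂ * X α₁ α₂) ^ (n - 1) *
          (Y α₁ α₂ * Y α₁ α₂ ^ (-t))
        = X α₁ α₂ ^ (-s) * (X α₁ α₂ * (Y α₁ α₂ * X α₁ α₂) ^ (n - 1) * Y α₁ α₂) *
          Y α₁ α₂ ^ (-t) := by group
      _ = X α₁ α₂ ^ (-s) * (X α₁ α₂ ^ s * Y α₁ α₂ ^ t) * Y α₁ α₂ ^ (-t) := by rw [← h1, h]
      _ = 1 := by group
  rcases Nat.lt_or_ge n 2 with hn2 | hn2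
  · have hn1 : n = 1 := by omega
    subst hn1
    simp only [Nat.sub_self, pow_zero, mul_one] at hmain
    have h2 : CoprodI.of (xg α₁ α₂ ^ (1 - s)) = CoprodI.of ((yg α₁ α₂ ^ (1 - t))⁻¹) := by
      rw [map_inv]
      exact eq_inv_of_mul_eq_one_left hmain
    obtain ⟨hu1, hv1⟩ := of_eq_of h2
    rw [inv_eq_one] at hv1
    refine ⟨rfl, ?_, ?_⟩
    · rw [X_zpow]
      have e : (s - 1 : ℤ) = -(1 - s) := by ring
      rw [e, zpow_neg, hu1, inv_one, map_one]
    · rw [Y_zpow]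
      have e : (t - 1 : ℤ) = -(1 - t) := by ring
      rw [e, zpow_neg, hv1, inv_one, map_one]
  · exfalso
    obtain ⟨k, hk⟩ : ∃ k, n - 1 = k + 1 := ⟨n - 2, by omega⟩
    obtain ⟨w, hw⟩ := exists_V hα₁ hα₂ (α₁ := α₁) (α₂ := α₂) k
    rw [hk, ← hw] at hmain
    by_cases hu : xg α₁ α₂ ^ (1 - s) = 1
    · by_cases hv : yg α₁ α₂ ^ (1 - t) = 1
      · rw [hu, hv, map_one, map_one, one_mul, mul_one] at hmain
        exact neword_prod_ne_one w hmain
      · have : (NeWord.append w (by simp) (NeWord.singleton _ hv)).prod = 1 := by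
          rw [NeWord.append_prod, NeWord.prod_singleton]
          rw [hu, map_one, one_mul] at hmain
          exact hmain
        exact neword_prod_ne_one _ this
    · by_cases hv : yg α₁ α₂ ^ (1 - t) = 1
      · have : (NeWord.append (NeWord.singleton _ hu) (by simp) w).prod = 1 := by
          rw [NeWord.append_prod, NeWord.prod_singleton]
          rw [hv, map_one, mul_one] at hmain
          exact hmain
        exact neword_prod_ne_one _ this
      · have : (NeWord.append (NeWord.append (NeWord.singleton _ hu) (by simp) w)
            (by simp) (NeWord.singleton _ hv)).prod = 1 := by
          simp only [NeWord.append_prod, NeWord.prod_singleton]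
          exact hmain
        exact neword_prod_ne_one _ this

end FPAux

end FPAuxSection

/-- If `a ≤ −1` and `(xy)^a x^γ` is a power of `x` or a power of `y` in `Γ`, then
`a = −1` and `γ ≡ 1 (mod α₁)`; moreover in that case `(xy)^{−1} x^γ = y⁻¹`. -/
theorem statement7 (hα₁ : 2 ≤ α₁) (hα₂ : 2 ≤ α₂) (a γ : ℤ)
    (ha : a ≤ -1)
    (hpow : ∃ m : ℤ,
      (xGen α₁ α₂ * yGen α₁ α₂) ^ a * xGen α₁ α₂ ^ γ = xGen α₁ α₂ ^ m ∨
      (xGen α₁ α₂ * yGen α₁ α₂) ^ a * xGen α₁ α₂ ^ γ = yGen α₁ α₂ ^ m) :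
    a = -1 ∧ ((α₁ : ℤ) ∣ (γ - 1)) ∧
      (xGen α₁ α₂ * yGen α₁ α₂)⁻¹ * xGen α₁ α₂ ^ γ = (yGen α₁ α₂)⁻¹ := by
  open FPAux in
  -- set-up
  set n : ℕ := (-a).toNat with hn_def
  have hn : 1 ≤ n := by omega
  have han : a = -(n : ℤ) := by omega
  -- extract the conclusions `a = -1` and `α₁ ∣ γ - 1`
  have main : a = -1 ∧ (α₁ : ℤ) ∣ (γ - 1) := by
    obtain ⟨m, hm | hm⟩ := hpow
    · -- power of x : impossible
      exfalso
      have hm' := congrArg (φ α₁ α₂) hm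
      simp only [map_mul, map_zpow, φ_x, φ_y] at hm'
      rw [han] at hm'
      -- (X Y)^(-n) * X^γ = X^m  ⟹  (X Y)^n = X^(γ - m) * Y^0
      have h2 : (X α₁ α₂ * Y α₁ α₂) ^ ((n : ℤ)) = X α₁ α₂ ^ (γ - m) * Y α₁ α₂ ^ (0 : ℤ) := by
        have h3 : X α₁ α₂ ^ (-γ) * (X α₁ α₂ * Y α₁ α₂) ^ ((n : ℤ))
            = ((X α₁ α₂ * Y α₁ α₂) ^ (-(n : ℤ)) * X α₁ α₂ ^ γ)⁻¹ := by group
        rw [hm'] at h3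
        calc (X α₁ α₂ * Y α₁ α₂) ^ ((n : ℤ))
            = X α₁ α₂ ^ γ * (X α₁ α₂ ^ (-γ) * (X α₁ α₂ * Y α₁ α₂) ^ ((n : ℤ))) := by group
          _ = X α₁ α₂ ^ γ * (X α₁ α₂ ^ m)⁻¹ := by rw [h3]
          _ = X α₁ α₂ ^ (γ - m) * Y α₁ α₂ ^ (0 : ℤ) := by group
      rw [zpow_natCast] at h2
      obtain ⟨-, -, hY1⟩ := key hα₁ hα₂ n hn _ _ h2
      -- Y^(0 - 1) = 1 contradicts yg ≠ 1
      have : Y α₁ α₂ = 1 := by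
        have := congrArg (· * Y α₁ α₂) hY1
        simpa using this.symm
      rw [Y] at this
      exact hY hα₂ (Monoid.CoprodI.of_injective false (this.trans (map_one _).symm))
    · -- power of y
      have hm' := congrArg (φ α₁ α₂) hm
      simp only [map_mul, map_zpow, φ_x, φ_y] at hm'
      rw [han] at hm'
      have h2 : (X α₁ α₂ * Y α₁ α₂) ^ ((n : ℤ)) = X α₁ α₂ ^ γ * Y α₁ α₂ ^ (-m) := by
        have h3 : X α₁ α₂ ^ (-γ) * (X α₁ α₂ * Y α₁ α₂) ^ ((n : ℤ))
            = ((X α₁ α₂ * Y α₁ α₂) ^ (-(n : ℤ)) * X α₁ α₂ ^ γ)⁻¹ := by group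
        rw [hm'] at h3
        calc (X α₁ α₂ * Y α₁ α₂) ^ ((n : ℤ))
            = X α₁ α₂ ^ γ * (X α₁ α₂ ^ (-γ) * (X α₁ α₂ * Y α₁ α₂) ^ ((n : ℤ))) := by group
          _ = X α₁ α₂ ^ γ * (Y α₁ α₂ ^ m)⁻¹ := by rw [h3]
          _ = X α₁ α₂ ^ γ * Y α₁ α₂ ^ (-m) := by group
      rw [zpow_natCast] at h2
      obtain ⟨hn1, hX1, -⟩ := key hα₁ hα₂ n hn _ _ h2
      refine ⟨by omega, ?_⟩
      rw [X_zpow] at hX1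
      have hxg : xg α₁ α₂ ^ (γ - 1) = 1 :=
        Monoid.CoprodI.of_injective true (hX1.trans (map_one _).symm)
      have hxg' : (Multiplicative.ofAdd (1 : ZMod α₁)) ^ (γ - 1) = 1 := hxg
      have hz : ((γ - 1 : ℤ) : ZMod α₁) = 0 := by
        have h0 := congrArg Multiplicative.toAdd hxg'
        rw [toAdd_zpow] at h0
        simpa [zsmul_eq_mul] using h0
      exact (ZMod.intCast_zmod_eq_zero_iff_dvd _ _).mp hz
  obtain ⟨ha1, hdvd⟩ := main
  refine ⟨ha1, hdvd, ?_⟩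
  -- x^γ = x since γ ≡ 1 (mod α₁)
  have hxγ : xGen α₁ α₂ ^ γ = xGen α₁ α₂ := by
    rw [xGen, ← map_zpow]
    congr 1
    have hz : ((γ - 1 : ℤ) : ZMod α₁) = 0 := (ZMod.intCast_zmod_eq_zero_iff_dvd _ _).mpr hdvd
    have hγ1 : ((γ : ℤ) : ZMod α₁) = 1 := by
      have : ((γ : ℤ) : ZMod α₁) - 1 = 0 := by push_cast at hz ⊢; linear_combination hz
      linear_combination this
    apply Multiplicative.toAdd.injective
    rw [toAdd_zpow]
    simpa [zsmul_eq_mul] using hγ1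
  rw [hxγ, mul_inv_rev, mul_assoc, inv_mul_cancel, mul_one]
end

section
/- Let u ∈ A with u ∉ C and v ∈ B with v ∉ C. Then the commutator [u,v] = u v u⁻¹ v⁻¹ is a nontrivial element of G, and moreover [u,v] is not conjugate in G to any element of A nor to any element of B (so every word conjugate to [u,v]^{±1} has length at least 4 in the amalgamated free product normal form). -/
open Monoid
open scoped commutatorElement

namespace Statement10Aux

open Monoid.PushoutI Monoid.PushoutI.NormalWord

variable {ι : Type*} {H : Type*} [Group H] {G : ι → Type*} [∀ i, Group (G i)]
  {φ : ∀ i, H →* G i} {d : NormalWord.Transversal φ}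
  [DecidableEq ι] [∀ i, DecidableEq (G i)]

lemma base_smul_toList (h : H) (w : NormalWord d) :
    (PushoutI.base φ h • w).toList = w.toList := by
  rw [base_smul_def]

lemma cons_toList {i : ι} (g : G i) (w : NormalWord d) (hmw : w.fstIdx ≠ some i)
    (hgr : g ∉ (φ i).range) :
    ∃ x : G i, (NormalWord.cons g w hmw hgr).toList = ⟨i, x⟩ :: w.toList :=
  ⟨_, rfl⟩

lemma length_of_smul_le (w : NormalWord d) (i : ι) (c : G i) :
    (PushoutI.of (φ := φ) i c • w).toList.length ≤ w.toList.length + 1 := by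
  induction w using NormalWord.consRecOn generalizing i c with
  | empty =>
    by_cases hc : c ∈ (φ i).range
    · obtain ⟨h, rfl⟩ := hc
      rw [of_apply_eq_base, base_smul_toList]
      simp
    · have hmw : (NormalWord.empty (d := d)).fstIdx ≠ some i := by
        simp [CoprodI.Word.fstIdx, CoprodI.Word.empty]
      rw [← cons_eq_smul c NormalWord.empty hmw hc]
      obtain ⟨x, hx⟩ := cons_toList c NormalWord.empty hmw hc
      simp [hx]
  | cons j g w hmw hgn hgr hw1 ih =>
    obtain ⟨x, hx⟩ := cons_toList g w hmw hgr
    have hlen : (PushoutI.of (φ := φ) j g • w).toList.length = w.toList.length + 1 := by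
      rw [← cons_eq_smul g w hmw hgr]; simp [hx]
    rw [cons_eq_smul g w hmw hgr]
    by_cases hij : i = j
    · subst hij
      rw [← mul_smul, ← map_mul, hlen]
      by_cases hcg : c * g ∈ (φ i).range
      · obtain ⟨h, hh⟩ := hcg
        rw [← hh, of_apply_eq_base, base_smul_toList]
        omega
      · rw [← cons_eq_smul (c * g) w hmw hcg]
        obtain ⟨y, hy⟩ := cons_toList (c * g) w hmw hcg
        simp [hy]
    · have hfst : (PushoutI.of (φ := φ) j g • w).fstIdx ≠ some i := by
        rw [← cons_eq_smul g w hmw hgr]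
        intro hcontra
        have hj : (NormalWord.cons g w hmw hgr).fstIdx = some j := by
          simp [CoprodI.Word.fstIdx, hx]
        rw [hj] at hcontra
        exact hij (Option.some_injective _ hcontra).symm
      by_cases hc : c ∈ (φ i).range
      · obtain ⟨h, rfl⟩ := hc
        rw [of_apply_eq_base, base_smul_toList]
        omega
      · rw [← cons_eq_smul c _ hfst hc]
        obtain ⟨y, hy⟩ := cons_toList c _ hfst hc
        simp [hy]
  | base h w hw1 ih =>
    have hkey : PushoutI.of (φ := φ) i c * PushoutI.base φ h
        = PushoutI.of (φ := φ) i (c * φ i h) := by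
      rw [map_mul, of_apply_eq_base]
    rw [← mul_smul, hkey, base_smul_toList]
    exact ih _ _

lemma exists_bound (g : PushoutI φ) :
    ∃ K : ℕ, ∀ w : NormalWord d, (g • w).toList.length ≤ w.toList.length + K := by
  induction g using PushoutI.induction_on with
  | of i g => exact ⟨1, fun w => length_of_smul_le w i g⟩
  | base h => exact ⟨0, fun w => by rw [base_smul_toList]; omega⟩
  | mul x y ihx ihy =>
    obtain ⟨K₁, h₁⟩ := ihx
    obtain ⟨K₂, h₂⟩ := ihy
    refine ⟨K₂ + K₁, fun w => ?_⟩
    rw [mul_smul]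
    calc (x • y • w).toList.length ≤ (y • w).toList.length + K₁ := h₁ _
      _ ≤ w.toList.length + K₂ + K₁ := by have := h₂ w; omega
      _ = w.toList.length + (K₂ + K₁) := by omega

lemma length_of_smul_notmem {i : ι} {c : G i} (hc : c ∉ (φ i).range) (w : NormalWord d)
    (hw : w.fstIdx ≠ some i) :
    (PushoutI.of (φ := φ) i c • w).toList.length = w.toList.length + 1 ∧
      (PushoutI.of (φ := φ) i c • w).fstIdx = some i := by
  rw [← cons_eq_smul c w hw hc]
  obtain ⟨x, hx⟩ := cons_toList c w hw hc
  constructor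
  · simp [hx]
  · simp [CoprodI.Word.fstIdx, hx]

end Statement10Aux

open Statement10Aux Monoid.PushoutI Monoid.PushoutI.NormalWord

/-- In an amalgamated free product `G = A ∗_C B` (with `C` embedded in `A = G 0` and
`B = G 1` by injective homomorphisms), if `u ∈ A ∖ C` and `v ∈ B ∖ C`, then the
commutator `[u,v] = u v u⁻¹ v⁻¹` is nontrivial in `G`, and it is not conjugate in `G`
to any element of `A` nor to any element of `B`. -/
theorem statement10 {C : Type*} [Group C] {G : Fin 2 → Type*} [∀ i, Group (G i)]
    (φ : ∀ i, C →* G i) (hφ : ∀ i, Function.Injective (φ i))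
    (u : G 0) (hu : u ∉ (φ 0).range) (v : G 1) (hv : v ∉ (φ 1).range) :
    ⁅PushoutI.of (φ := φ) 0 u, PushoutI.of (φ := φ) 1 v⁆ ≠ 1 ∧
    (∀ a : G 0, ¬ IsConj ⁅PushoutI.of (φ := φ) 0 u, PushoutI.of (φ := φ) 1 v⁆
        (PushoutI.of (φ := φ) 0 a)) ∧
    (∀ b : G 1, ¬ IsConj ⁅PushoutI.of (φ := φ) 0 u, PushoutI.of (φ := φ) 1 v⁆
        (PushoutI.of (φ := φ) 1 b)) := by
  classical
  obtain ⟨d⟩ := NormalWord.transversal_nonempty φ hφ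
  set z := ⁅PushoutI.of (φ := φ) 0 u, PushoutI.of (φ := φ) 1 v⁆ with hz
  have huinv : u⁻¹ ∉ (φ 0).range := fun h => hu ((φ 0).range.inv_mem_iff.mp h)
  have hvinv : v⁻¹ ∉ (φ 1).range := fun h => hv ((φ 1).range.inv_mem_iff.mp h)
  -- one application of z adds 4 to the length
  have hstep : ∀ w : NormalWord d, w.fstIdx ≠ some 1 →
      (z • w).toList.length = w.toList.length + 4 ∧ (z • w).fstIdx = some (0 : Fin 2) := by
    intro w hw
    have hzsmul : z • w = PushoutI.of (φ := φ) 0 u • (PushoutI.of (φ := φ) 1 v •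
        (PushoutI.of (φ := φ) 0 u⁻¹ • (PushoutI.of (φ := φ) 1 v⁻¹ • w))) := by
      rw [hz, commutatorElement_def, ← map_inv, ← map_inv, mul_smul, mul_smul, mul_smul]
    obtain ⟨l1, f1⟩ := length_of_smul_notmem hvinv w hw
    obtain ⟨l2, f2⟩ := length_of_smul_notmem huinv _ (by rw [f1]; decide)
    obtain ⟨l3, f3⟩ := length_of_smul_notmem hv _ (by rw [f2]; decide)
    obtain ⟨l4, f4⟩ := length_of_smul_notmem hu _ (by rw [f3]; decide)
    rw [hzsmul]
    exact ⟨by omega, f4⟩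
  -- powers of z
  have hzpow : ∀ n : ℕ, ((z ^ n) • (NormalWord.empty : NormalWord d)).toList.length = 4 * n ∧
      ((z ^ n) • (NormalWord.empty : NormalWord d)).fstIdx ≠ some 1 := by
    intro n
    induction n with
    | zero =>
      rw [pow_zero, one_smul]
      exact ⟨rfl, by simp [CoprodI.Word.fstIdx, CoprodI.Word.empty]⟩
    | succ n ih =>
      rw [pow_succ', mul_smul]
      obtain ⟨hl, hf⟩ := hstep _ ih.2
      exact ⟨by omega, by rw [hf]; decide⟩
  -- z is not conjugate to any element of a factor
  have key : ∀ (i : Fin 2) (a : G i), ¬ IsConj z (PushoutI.of (φ := φ) i a) := by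
    intro i a hconj
    obtain ⟨c, hc⟩ := isConj_iff.mp hconj
    obtain ⟨K₁, hK₁⟩ := exists_bound (d := d) c⁻¹
    obtain ⟨K₂, hK₂⟩ := exists_bound (d := d) c
    set n := K₁ + K₂ + 1 with hn
    have hzn : z ^ n = c⁻¹ * PushoutI.of (φ := φ) i (a ^ n) * c := by
      rw [map_pow, ← hc, conj_pow]
      group
    have h1 := (hzpow n).1
    rw [hzn, mul_smul, mul_smul] at h1
    have b1 := hK₁ (PushoutI.of (φ := φ) i (a ^ n) • (c • (NormalWord.empty : NormalWord d)))
    have b2 := length_of_smul_le (c • (NormalWord.empty : NormalWord d)) i (a ^ n)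
    have b3 := hK₂ (NormalWord.empty : NormalWord d)
    have b4 : (NormalWord.empty : NormalWord d).toList.length = 0 := rfl
    omega
  refine ⟨?_, fun a => key 0 a, fun b => key 1 b⟩
  intro h1
  exact key 0 1 (by simp [← hz, h1])
end

section
/- Let u, v, x ∈ A with u, v, x ∉ C and let s, t ∈ B with s, t ∉ C. Then the element [u, t v t⁻¹] = u (t v t⁻¹) u⁻¹ (t v t⁻¹)⁻¹ of G (a cyclically reduced word of length 8) is not conjugate in G to [s, x] = s x s⁻¹ x⁻¹ nor to [s, x]⁻¹ (cyclically reduced words of length 4). -/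
open Monoid
open scoped commutatorElement

namespace AmalgConjAux

open Monoid.PushoutI Monoid.PushoutI.NormalWord Monoid.CoprodI

variable {C : Type*} [Group C] {G : Fin 2 → Type*} [∀ i, Group (G i)] (φ : ∀ i, C →* G i)

/-- The product in the pushout of a list of letters. -/
def prodL (l : List ((i : Fin 2) × G i)) : PushoutI φ :=
  (l.map fun a => PushoutI.of (φ := φ) a.1 a.2).prod

/-- A list of letters is reduced: adjacent letters have distinct indices, and no letter lies
in the image of the base group. -/
def Red (l : List ((i : Fin 2) × G i)) : Prop :=
  (l.map Sigma.fst).IsChain Ne ∧ ∀ a ∈ l, a.2 ∉ (φ a.1).range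

/-- Formal inverse of a list of letters. -/
def invRev (l : List ((i : Fin 2) × G i)) : List ((i : Fin 2) × G i) :=
  (l.map fun a => ⟨a.1, a.2⁻¹⟩).reverse

/-- Cyclically reduced (for a reduced list): nonempty and the first and last indices differ. -/
def Cyc (l : List ((i : Fin 2) × G i)) : Prop :=
  l ≠ [] ∧ (l.map Sigma.fst).head? ≠ (l.map Sigma.fst).getLast?

@[simp] theorem prodL_nil : prodL φ [] = 1 := rfl

@[simp] theorem prodL_cons (a : (i : Fin 2) × G i) (l) :
    prodL φ (a :: l) = PushoutI.of (φ := φ) a.1 a.2 * prodL φ l := by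
  simp [prodL]

@[simp] theorem prodL_append (l₁ l₂) :
    prodL φ (l₁ ++ l₂) = prodL φ l₁ * prodL φ l₂ := by
  simp [prodL]

@[simp] theorem invRev_map_fst (l : List ((i : Fin 2) × G i)) :
    (invRev l).map Sigma.fst = (l.map Sigma.fst).reverse := by
  simp [invRev, List.map_reverse, List.map_map]

@[simp] theorem invRev_length (l : List ((i : Fin 2) × G i)) :
    (invRev l).length = l.length := by simp [invRev]

@[simp] theorem prodL_invRev (l) : prodL φ (invRev l) = (prodL φ l)⁻¹ := by
  induction l with
  | nil => simp [invRev]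
  | cons a l ih =>
    simp only [invRev, List.map_cons, List.reverse_cons] at *
    rw [prodL_append] at *
    simp [ih, mul_comm]

theorem Red.invRev {l} (h : Red φ l) : Red φ (invRev l) := by
  constructor
  · rw [invRev_map_fst, List.isChain_reverse]
    exact h.1.imp fun a b hab => hab.symm
  · intro a ha
    simp only [AmalgConjAux.invRev, List.mem_reverse, List.mem_map] at ha
    obtain ⟨b, hb, rfl⟩ := ha
    intro hmem
    exact h.2 b hb (by simpa using hmem)

theorem Cyc.invRev {l : List ((i : Fin 2) × G i)} (h : Cyc l) : Cyc (invRev l) := by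
  refine ⟨by simp [AmalgConjAux.invRev, h.1], ?_⟩
  rw [invRev_map_fst, List.head?_reverse, List.getLast?_reverse]
  exact fun hh => h.2 hh.symm


/-- Package a reduced list as a `CoprodI.Word`. -/
def toWord (l : List ((i : Fin 2) × G i)) (h : Red φ l) : CoprodI.Word G :=
  ⟨l, fun a ha h1 => h.2 a ha (h1 ▸ one_mem _), (List.isChain_map Sigma.fst).mp h.1⟩

theorem ofCoprodI_toWord_prod (l : List ((i : Fin 2) × G i)) (h : Red φ l) :
    PushoutI.ofCoprodI ((toWord φ l h).prod) = prodL φ l := by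
  simp only [CoprodI.Word.prod, toWord, prodL, ← List.comp_map]
  rw [← List.prod_hom _ (PushoutI.ofCoprodI (φ := φ))]
  simp [List.map_map, Function.comp_def]

/-- Uniqueness of the index sequence of a reduced word representing a given element. -/
theorem red_fst_eq (hφ : ∀ i, Function.Injective (φ i)) {l₁ l₂ : List ((i : Fin 2) × G i)}
    (h₁ : Red φ l₁) (h₂ : Red φ l₂) (h : prodL φ l₁ = prodL φ l₂) :
    l₁.map Sigma.fst = l₂.map Sigma.fst := by
  obtain ⟨d⟩ := transversal_nonempty φ hφ
  have r₁ : Reduced φ (toWord φ l₁ h₁) := fun a ha => h₁.2 a ha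
  have r₂ : Reduced φ (toWord φ l₂ h₂) := fun a ha => h₂.2 a ha
  obtain ⟨w₁, hp₁, hm₁⟩ := r₁.exists_normalWord_prod_eq d
  obtain ⟨w₂, hp₂, hm₂⟩ := r₂.exists_normalWord_prod_eq d
  have : w₁ = w₂ := prod_injective (by
    rw [hp₁, hp₂, ofCoprodI_toWord_prod, ofCoprodI_toWord_prod, h])
  rw [show l₁ = (toWord φ l₁ h₁).toList from rfl, show l₂ = (toWord φ l₂ h₂).toList from rfl,
    ← hm₁, ← hm₂, this]

theorem red_length_eq (hφ : ∀ i, Function.Injective (φ i)) {l₁ l₂ : List ((i : Fin 2) × G i)}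
    (h₁ : Red φ l₁) (h₂ : Red φ l₂) (h : prodL φ l₁ = prodL φ l₂) :
    l₁.length = l₂.length := by
  have := red_fst_eq φ hφ h₁ h₂ h
  simpa using congrArg List.length this

/-- Every element of the pushout is a base element times the product of a reduced list. -/
theorem exists_decomp (hφ : ∀ i, Function.Injective (φ i)) (g : PushoutI φ) :
    ∃ (h : C) (q : List ((i : Fin 2) × G i)), Red φ q ∧
      g = PushoutI.base φ h * prodL φ q := by
  obtain ⟨d⟩ := transversal_nonempty φ hφ
  classical
  let w : NormalWord d := NormalWord.equiv (d := d) g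
  have hred : Red φ w.toList := by
    refine ⟨(List.isChain_map Sigma.fst).mpr w.chain_ne, ?_⟩
    rintro ⟨i, a⟩ ha hmem
    have hset : a ∈ d.set i := w.normalized i a ha
    have hne : a ≠ 1 := w.ne_one _ ha
    obtain ⟨c, hc⟩ := hmem
    have hinj := (d.compl i).1
    have : (⟨⟨(φ i c)⁻¹, inv_mem ⟨c, rfl⟩⟩, ⟨a, hset⟩⟩ :
        ((φ i).range : Set (G i)) × (d.set i)) =
        ⟨⟨1, one_mem _⟩, ⟨1, d.one_mem i⟩⟩ := by
      apply hinj
      simp [hc]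
    exact hne (by simpa using congrArg (fun p => (p.2 : G i)) this)
  refine ⟨w.head, w.toList, hred, ?_⟩
  have hg : g = NormalWord.prod w :=
    ((NormalWord.equiv (d := d)).symm_apply_apply g).symm
  rw [hg, NormalWord.prod]
  congr 1
  exact ofCoprodI_toWord_prod φ w.toList hred


theorem conj_of (i : Fin 2) (h : C) (g : G i) :
    PushoutI.base φ h * PushoutI.of (φ := φ) i g =
      PushoutI.of (φ := φ) i (φ i h * g * (φ i h)⁻¹) * PushoutI.base φ h := by
  rw [← Monoid.PushoutI.of_apply_eq_base φ i h, ← map_mul, ← map_mul]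
  congr 1
  group

theorem base_mul_prodL (h : C) (l : List ((i : Fin 2) × G i)) :
    PushoutI.base φ h * prodL φ l =
      prodL φ (l.map fun a => ⟨a.1, φ a.1 h * a.2 * (φ a.1 h)⁻¹⟩) * PushoutI.base φ h := by
  induction l with
  | nil => simp
  | cons a l ih =>
    simp only [List.map_cons, prodL_cons]
    rw [← mul_assoc, conj_of, mul_assoc, ih, ← mul_assoc]

theorem Red.conj_map {h : C} {l : List ((i : Fin 2) × G i)} (hl : Red φ l) :
    Red φ (l.map fun a => ⟨a.1, φ a.1 h * a.2 * (φ a.1 h)⁻¹⟩) := by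
  constructor
  · have : (l.map fun a : (i : Fin 2) × G i =>
        (⟨a.1, φ a.1 h * a.2 * (φ a.1 h)⁻¹⟩ : (i : Fin 2) × G i)).map Sigma.fst
        = l.map Sigma.fst := by
      simp [List.map_map, Function.comp_def]
    rw [this]; exact hl.1
  · rintro a ha
    simp only [List.mem_map] at ha
    obtain ⟨b, hb, rfl⟩ := ha
    intro hmem
    refine hl.2 b hb ?_
    have : b.2 = (φ b.1 h)⁻¹ * (φ b.1 h * b.2 * (φ b.1 h)⁻¹) * (φ b.1 h) := by group
    rw [this]
    exact mul_mem (mul_mem (inv_mem ⟨h, rfl⟩) hmem) ⟨h, rfl⟩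

/-- Key step: conjugating a cyclically reduced word by a conjugator ending in a letter whose
index matches the first index of the word. -/
theorem step {q' : List ((i : Fin 2) × G i)} {c : (i : Fin 2) × G i}
    (hq : Red φ (q' ++ [c]))
    (IH : ∀ y, Red φ y → Cyc y →
      ∃ z, Red φ z ∧ prodL φ z = prodL φ q' * prodL φ y * (prodL φ q')⁻¹ ∧
        y.length ≤ z.length)
    (y : List ((i : Fin 2) × G i)) (hy : Red φ y) (hc : Cyc y)
    (hhead : (y.map Sigma.fst).head? = some c.1) :
    ∃ z, Red φ z ∧
      prodL φ z = prodL φ (q' ++ [c]) * prodL φ y * (prodL φ (q' ++ [c]))⁻¹ ∧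
      y.length ≤ z.length := by
  obtain ⟨j, cg⟩ := c
  rcases y with _ | ⟨⟨i, ag⟩, _ | ⟨b, yr⟩⟩
  · exact absurd rfl hc.1
  · exact absurd rfl hc.2
  simp only [List.map_cons, List.head?_cons, Option.some.injEq] at hhead
  subst hhead
  have hcg : cg ∉ (φ i).range := by
    simpa using hq.2 ⟨i, cg⟩ (by simp)
  have hag : ag ∉ (φ i).range := hy.2 ⟨i, ag⟩ (by simp)
  have hbmem : b.2 ∉ (φ b.1).range := hy.2 b (by simp)
  have hchain := hy.1
  simp only [List.map_cons, List.isChain_cons_cons] at hchain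
  have hjb : i ≠ b.1 := hchain.1
  have hchainb : (b.1 :: yr.map Sigma.fst).IsChain Ne := by
    simpa using hchain.2
  have hlast : ∀ x ∈ (b.1 :: yr.map Sigma.fst).getLast?, x ≠ i := by
    intro x hx
    have h2 := hc.2
    simp only [List.map_cons, List.head?_cons, List.getLast?_cons_cons] at h2
    rw [Option.mem_def] at hx
    rw [hx] at h2
    exact fun hxj => h2 (by rw [hxj])
  have hq' : Red φ q' := by
    refine ⟨?_, fun a ha => hq.2 a (by simp [ha])⟩
    have := hq.1
    rw [List.map_append, List.isChain_append] at this
    exact this.1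
  by_cases hmem : cg * ag ∈ (φ i).range
  · -- absorption: conjugate is again cyclically reduced of the same length
    obtain ⟨h, hh⟩ := hmem
    refine ?_
    set y' : List ((i : Fin 2) × G i) :=
      (⟨b.1, φ b.1 h * b.2⟩ :: yr) ++ [⟨i, cg⁻¹⟩] with hy'def
    have hfst : y'.map Sigma.fst = (b.1 :: yr.map Sigma.fst) ++ [i] := by
      simp [y']
    have hred' : Red φ y' := by
      constructor
      · rw [hfst, List.isChain_append]
        exact ⟨hchainb, List.isChain_singleton i, fun x hx t ht => by
          simp only [List.head?_cons, Option.mem_def, Option.some.injEq] at ht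
          exact ht ▸ hlast x hx⟩
      · intro a ha
        simp only [y', List.mem_append, List.mem_cons, List.not_mem_nil, or_false] at ha
        rcases ha with (rfl | ha) | rfl
        · intro hmem'
          exact hbmem (by
            have : b.2 = (φ b.1 h)⁻¹ * (φ b.1 h * b.2) := by group
            rw [this]; exact mul_mem (inv_mem ⟨h, rfl⟩) hmem')
        · exact hy.2 a (by simp [ha])
        · rintro ⟨w, hw⟩
          exact hcg ⟨w⁻¹, by rw [map_inv, hw, inv_inv]⟩
    have hcyc' : Cyc y' := by
      refine ⟨by simp [y'], ?_⟩
      rw [hfst, List.getLast?_concat]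
      simp only [List.cons_append, List.head?_cons, ne_eq, Option.some.injEq]
      exact fun hbj => hjb hbj.symm
    obtain ⟨z, hz, hpz, hlz⟩ := IH y' hred' hcyc'
    have hkey : PushoutI.of (φ := φ) i cg * PushoutI.of (φ := φ) i ag
        = PushoutI.of (φ := φ) b.1 (φ b.1 h) := by
      rw [← map_mul, ← hh, Monoid.PushoutI.of_apply_eq_base,
        Monoid.PushoutI.of_apply_eq_base]
    have hprod' : prodL φ y' =
        PushoutI.of (φ := φ) i cg * prodL φ (⟨i, ag⟩ :: b :: yr) *
          (PushoutI.of (φ := φ) i cg)⁻¹ := by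
      simp only [y', prodL_append, prodL_cons, prodL_nil, mul_one, map_mul, map_inv]
      rw [← mul_assoc, ← mul_assoc, ← hkey]
    refine ⟨z, hz, ?_, by simpa [y'] using hlz⟩
    rw [hpz, hprod']
    simp only [prodL_append, prodL_cons, prodL_nil, mul_one, mul_inv_rev]
    group
  · -- no absorption: the whole conjugate is already reduced
    refine ⟨(q' ++ [⟨i, cg * ag⟩]) ++ ((b :: yr) ++ invRev (q' ++ [⟨i, cg⟩])), ?_, ?_, ?_⟩
    · constructor
      · have hQ : ((q' ++ [(⟨i, cg⟩ : (i : Fin 2) × G i)]).map Sigma.fst).IsChain Ne := hq.1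
        have hfst1 : ((q' ++ [(⟨i, cg * ag⟩ : (i : Fin 2) × G i)]).map Sigma.fst)
            = (q' ++ [(⟨i, cg⟩ : (i : Fin 2) × G i)]).map Sigma.fst := by simp
        rw [List.map_append, List.isChain_append]
        refine ⟨by rw [hfst1]; exact hQ, ?_, ?_⟩
        · rw [List.map_append, List.isChain_append]
          refine ⟨by simpa using hchainb, ?_, ?_⟩
          · rw [invRev_map_fst, List.isChain_reverse]
            exact hQ.imp fun a b hab => hab.symm
          · intro x hx t ht
            rw [invRev_map_fst, List.head?_reverse] at ht
            simp only [List.map_append, List.map_cons, List.map_nil,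
              List.getLast?_concat, Option.mem_def, Option.some.injEq] at ht
            subst ht
            exact hlast x hx
        · intro x hx t ht
          simp only [List.map_append, List.map_cons, List.map_nil, List.getLast?_concat,
            Option.mem_def, Option.some.injEq] at hx
          subst hx
          simp only [List.map_append, List.map_cons, List.cons_append, List.head?_cons,
            Option.mem_def, Option.some.injEq] at ht
          subst ht
          exact hjb
      · intro a ha
        simp only [List.mem_append, List.mem_cons, List.not_mem_nil, or_false] at ha
        rcases ha with (ha | rfl) | ((rfl | ha) | ha)
        · exact hq'.2 a ha
        · exact hmem
        · exact hbmem
        · exact hy.2 a (by simp [ha])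
        · exact (hq.invRev φ).2 a ha
    · simp only [prodL_append, prodL_cons, prodL_nil, mul_one, prodL_invRev, map_mul,
        mul_inv_rev]
      group
    · simp only [List.length_append, List.length_cons, invRev_length, List.length_singleton]
      omega


theorem main (q : List ((i : Fin 2) × G i)) :
    Red φ q → ∀ y, Red φ y → Cyc y →
      ∃ z, Red φ z ∧ prodL φ z = prodL φ q * prodL φ y * (prodL φ q)⁻¹ ∧
        y.length ≤ z.length := by
  induction q using List.reverseRecOn with
  | nil => exact fun _ y hy _ => ⟨y, hy, by simp, le_rfl⟩
  | append_singleton q' c IH =>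
    intro hq y hy hc
    have hq' : Red φ q' := by
      refine ⟨?_, fun a ha => hq.2 a (by simp [ha])⟩
      have := hq.1
      rw [List.map_append, List.isChain_append] at this
      exact this.1
    by_cases hh : (y.map Sigma.fst).head? = some c.1
    · exact step φ hq (IH hq') y hy hc hh
    · have hne : (y.map Sigma.fst) ≠ [] := by
        simpa using hc.1
      obtain ⟨h0, hh0⟩ := Option.isSome_iff_exists.mp (List.isSome_head?.mpr hne)
      obtain ⟨l0, hl0⟩ := Option.isSome_iff_exists.mp (List.getLast?_isSome.mpr hne)
      have hfin : ∀ a b c : Fin 2, a ≠ b → c ≠ a → c = b := by decide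
      have h0l0 : h0 ≠ l0 := by
        intro hx
        exact hc.2 (by rw [hh0, hl0, hx])
      have hch0 : c.1 ≠ h0 := by
        intro hx
        exact hh (by rw [hh0, hx])
      have hh' : ((invRev y).map Sigma.fst).head? = some c.1 := by
        rw [invRev_map_fst, List.head?_reverse, hl0, hfin h0 l0 c.1 h0l0 hch0]
      obtain ⟨z, hz, hpz, hlz⟩ := step φ hq (IH hq') (invRev y) (hy.invRev φ)
        (hc.invRev) hh'
      refine ⟨invRev z, hz.invRev φ, ?_, by simpa using hlz⟩
      rw [prodL_invRev, hpz, prodL_invRev]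
      group

theorem not_conj (hφ : ∀ i, Function.Injective (φ i))
    {la lb : List ((i : Fin 2) × G i)} (hla : Red φ la) (hca : Cyc la)
    (hlb : Red φ lb) (hlen : lb.length < la.length) (g : PushoutI φ) :
    g * prodL φ la * g⁻¹ ≠ prodL φ lb := by
  intro heq
  obtain ⟨h, q, hq, rfl⟩ := exists_decomp φ hφ g
  obtain ⟨z, hz, hpz, hlz⟩ := main φ q hq la hla hca
  have h2 : prodL φ lb =
      prodL φ (z.map fun a => ⟨a.1, φ a.1 h * a.2 * (φ a.1 h)⁻¹⟩) := by
    rw [← heq]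
    have hconj : (PushoutI.base φ h * prodL φ q) * prodL φ la *
        (PushoutI.base φ h * prodL φ q)⁻¹
        = PushoutI.base φ h * (prodL φ q * prodL φ la * (prodL φ q)⁻¹) *
          (PushoutI.base φ h)⁻¹ := by
      group
    rw [hconj, ← hpz, base_mul_prodL]
    group
  have hlen2 := red_length_eq φ hφ hlb (hz.conj_map φ) h2
  simp only [List.length_map] at hlen2
  omega

end AmalgConjAux

open AmalgConjAux in
/-- In an amalgamated free product `G = A ∗_C B` (with `C` embedded in `A = G 0` and
`B = G 1` by injective homomorphisms), if `u, v, x ∈ A ∖ C` and `s, t ∈ B ∖ C`, then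
the element `[u, t v t⁻¹]` of `G` (a cyclically reduced word of length 8) is not
conjugate in `G` to `[s, x]` nor to `[s, x]⁻¹` (cyclically reduced words of length 4). -/
theorem statement11 {C : Type*} [Group C] {G : Fin 2 → Type*} [∀ i, Group (G i)]
    (φ : ∀ i, C →* G i) (hφ : ∀ i, Function.Injective (φ i))
    (u v x : G 0) (hu : u ∉ (φ 0).range) (hv : v ∉ (φ 0).range) (hx : x ∉ (φ 0).range)
    (s t : G 1) (hs : s ∉ (φ 1).range) (ht : t ∉ (φ 1).range) :
    ¬ IsConj
        ⁅PushoutI.of (φ := φ) 0 u,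
          PushoutI.of (φ := φ) 1 t * PushoutI.of (φ := φ) 0 v *
            (PushoutI.of (φ := φ) 1 t)⁻¹⁆
        ⁅PushoutI.of (φ := φ) 1 s, PushoutI.of (φ := φ) 0 x⁆ ∧
    ¬ IsConj
        ⁅PushoutI.of (φ := φ) 0 u,
          PushoutI.of (φ := φ) 1 t * PushoutI.of (φ := φ) 0 v *
            (PushoutI.of (φ := φ) 1 t)⁻¹⁆
        ⁅PushoutI.of (φ := φ) 1 s, PushoutI.of (φ := φ) 0 x⁆⁻¹ := by
  classical
  set la : List ((i : Fin 2) × G i) :=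
    [⟨0, u⟩, ⟨1, t⟩, ⟨0, v⟩, ⟨1, t⁻¹⟩, ⟨0, u⁻¹⟩, ⟨1, t⟩, ⟨0, v⁻¹⟩, ⟨1, t⁻¹⟩] with hla_def
  set lb : List ((i : Fin 2) × G i) := [⟨1, s⟩, ⟨0, x⟩, ⟨1, s⁻¹⟩, ⟨0, x⁻¹⟩] with hlb_def
  have hA : ⁅PushoutI.of (φ := φ) 0 u,
      PushoutI.of (φ := φ) 1 t * PushoutI.of (φ := φ) 0 v *
        (PushoutI.of (φ := φ) 1 t)⁻¹⁆ = prodL φ la := by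
    simp only [hla_def, commutatorElement_def, prodL_cons, prodL_nil, map_inv, mul_one,
      mul_inv_rev, inv_inv]
    group
  have hB : ⁅PushoutI.of (φ := φ) 1 s, PushoutI.of (φ := φ) 0 x⁆ = prodL φ lb := by
    simp only [hlb_def, commutatorElement_def, prodL_cons, prodL_nil, map_inv, mul_one]
    group
  have hinv : ∀ (i : Fin 2) (g : G i), g ∉ (φ i).range → g⁻¹ ∉ (φ i).range :=
    fun i g hg hmem => hg (by simpa using inv_mem hmem)
  have hla : Red φ la := by
    refine ⟨by simp [hla_def], ?_⟩
    intro a ha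
    simp only [hla_def, List.mem_cons, List.not_mem_nil, or_false] at ha
    rcases ha with rfl | rfl | rfl | rfl | rfl | rfl | rfl | rfl <;>
      first
      | exact hu
      | exact hv
      | exact ht
      | exact hinv _ _ ht
      | exact hinv _ _ hu
      | exact hinv _ _ hv
  have hca : Cyc la := by
    refine ⟨by simp [hla_def], ?_⟩
    simp [hla_def]
  have hlb : Red φ lb := by
    refine ⟨by simp [hlb_def], ?_⟩
    intro a ha
    simp only [hlb_def, List.mem_cons, List.not_mem_nil, or_false] at ha
    rcases ha with rfl | rfl | rfl | rfl <;>
      first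
      | exact hs
      | exact hx
      | exact hinv _ _ hs
      | exact hinv _ _ hx
  constructor
  · rw [isConj_iff]
    rintro ⟨g, hg⟩
    rw [hA, hB] at hg
    exact not_conj φ hφ hla hca hlb (by simp [hla_def, hlb_def]) g hg
  · rw [isConj_iff]
    rintro ⟨g, hg⟩
    rw [hA, hB] at hg
    rw [← prodL_invRev] at hg
    exact not_conj φ hφ hla hca (hlb.invRev φ) (by simp [hla_def, hlb_def, invRev]) g hg
end
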